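/- arXiv:cs/0610141 — 3 statements merged into one kernel-verified Lean document; each statement's English description precedes it below -/
import Mathlib

section
/- Consider the random recursion Δ̄_{k+1} = λ^{T_k} (α Δ̄_k + C) where (T_k) are iid positive-integer random variables with E[λ^{η T_k}] = m < ∞, α ≥ 0 with α^η m < 1 (for η ≤ 1 take the η-th power subadditively), C ≥ 0, and λ > 1. Then sup_k E[Δ̄_k^η] < ∞. -/
open MeasureTheory ProbabilityTheory

lemma rpow_add_le_add_rpow_real {x y p : ℝ} (hx : 0 ≤ x) (hy : 0 ≤ y)
    (hp : 0 ≤ p) (hp1 : p ≤ 1) : (x + y) ^ p ≤ x ^ p + y ^ p := by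
  lift x to NNReal using hx
  lift y to NNReal using hy
  rw [← NNReal.coe_add, ← NNReal.coe_rpow, ← NNReal.coe_rpow, ← NNReal.coe_rpow,
    ← NNReal.coe_add, NNReal.coe_le_coe]
  exact NNReal.rpow_add_le_add_rpow x y hp hp1

/-- Random recursion Δ̄_{k+1} = λ^{T_k}(α Δ̄_k + C) with iid
positive-integer T_k, E[λ^{η T_k}] = m < ∞, α^η m < 1, C ≥ 0, λ > 1,
η ∈ (0,1], Δ̄_0 a nonnegative constant, T_k independent of Δ̄_k.
Then sup_k E[Δ̄_k^η] < ∞. -/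
theorem stmt6 {Ω : Type*} [MeasurableSpace Ω] (μ : Measure Ω)
    [IsProbabilityMeasure μ]
    (lam α C Δ₀ η m : ℝ) (hlam : 1 < lam) (hα : 0 ≤ α) (hC : 0 ≤ C)
    (hΔ₀ : 0 ≤ Δ₀) (hη : 0 < η) (hη1 : η ≤ 1)
    (T : ℕ → Ω → ℕ) (D : ℕ → Ω → ℝ)
    (hT1 : ∀ k ω, 1 ≤ T k ω)
    (hTmeas : ∀ k, Measurable (T k)) (hDmeas : ∀ k, Measurable (D k))
    (hiid : ∀ j k, IdentDistrib (T j) (T k) μ μ)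
    (hindep : ∀ k, IndepFun (T k) (D k) μ)
    (hm : ∀ k, Integrable (fun ω => lam ^ (η * (T k ω : ℝ))) μ ∧
      ∫ ω, lam ^ (η * (T k ω : ℝ)) ∂μ = m)
    (hcontr : α ^ η * m < 1)
    (h0 : ∀ ω, D 0 ω = Δ₀)
    (hrec : ∀ k ω, D (k + 1) ω = lam ^ (T k ω) * (α * D k ω + C)) :
    ∃ K : ℝ, ∀ k, ∫ ω, (D k ω) ^ η ∂μ ≤ K := by
  have hlam0 : (0:ℝ) < lam := lt_trans one_pos hlam
  -- D k is nonnegative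
  have hDnn : ∀ k ω, 0 ≤ D k ω := by
    intro k
    induction k with
    | zero => intro ω; rw [h0]; exact hΔ₀
    | succ k ih =>
        intro ω
        rw [hrec]
        exact mul_nonneg (le_of_lt (pow_pos hlam0 _))
          (add_nonneg (mul_nonneg hα (ih ω)) hC)
  have hm0 : 0 ≤ m := by
    rw [← (hm 0).2]
    exact integral_nonneg fun ω => le_of_lt (Real.rpow_pos_of_pos hlam0 _)
  have ha0 : 0 ≤ α ^ η * m := mul_nonneg (Real.rpow_nonneg hα _) hm0
  have h1a : 0 < 1 - α ^ η * m := by linarith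
  set K : ℝ := max (Δ₀ ^ η) (m * C ^ η / (1 - α ^ η * m)) with hK
  refine ⟨K, ?_⟩
  have main : ∀ k, Integrable (fun ω => (D k ω) ^ η) μ ∧ ∫ ω, (D k ω) ^ η ∂μ ≤ K := by
    intro k
    induction k with
    | zero =>
        refine ⟨by simp only [h0]; exact integrable_const _, ?_⟩
        simp only [h0]
        rw [integral_const]
        simp only [probReal_univ, one_smul]
        exact le_max_left _ _
    | succ k ih =>
        obtain ⟨ihint, ihbd⟩ := ih
        set X : Ω → ℝ := fun ω => lam ^ (η * (T k ω : ℝ)) with hXdef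
        set Y : Ω → ℝ := fun ω => (α * D k ω + C) ^ η with hYdef
        have hYnn : ∀ ω, 0 ≤ Y ω := fun ω =>
          Real.rpow_nonneg (add_nonneg (mul_nonneg hα (hDnn k ω)) hC) _
        have hgcont : Continuous (fun x : ℝ => (α * x + C) ^ η) :=
          ((continuous_const.mul continuous_id).add continuous_const).rpow_const
            fun x => Or.inr hη.le
        have hYmeas : Measurable Y := hgcont.measurable.comp (hDmeas k)
        -- pointwise bound for Y
        have hYle : ∀ ω, Y ω ≤ α ^ η * (D k ω) ^ η + C ^ η := by
          intro ω
          have h1 : Y ω ≤ (α * D k ω) ^ η + C ^ η :=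
            rpow_add_le_add_rpow_real (mul_nonneg hα (hDnn k ω)) hC hη.le hη1
          rwa [Real.mul_rpow hα (hDnn k ω)] at h1
        have hGint : Integrable (fun ω => α ^ η * (D k ω) ^ η + C ^ η) μ :=
          (ihint.const_mul _).add (integrable_const _)
        have hYint : Integrable Y μ := by
          refine hGint.mono' hYmeas.aestronglyMeasurable ?_
          filter_upwards with ω
          rw [Real.norm_of_nonneg (hYnn ω)]
          exact hYle ω
        -- independence of X and Y
        have hindepXY : IndepFun X Y μ := by
          have := (hindep k).comp (φ := fun n : ℕ => lam ^ (η * (n : ℝ)))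
            (ψ := fun x : ℝ => (α * x + C) ^ η) measurable_from_top
            hgcont.measurable
          exact this
        -- rewrite the integrand
        have hpt : ∀ ω, (D (k+1) ω) ^ η = X ω * Y ω := by
          intro ω
          rw [hrec]
          rw [Real.mul_rpow (le_of_lt (pow_pos hlam0 _))
            (add_nonneg (mul_nonneg hα (hDnn k ω)) hC)]
          congr 1
          rw [← Real.rpow_natCast lam (T k ω), ← Real.rpow_mul hlam0.le, mul_comm]
        have hXint : Integrable X μ := (hm k).1
        have hXY : ∫ ω, (D (k+1) ω) ^ η ∂μ = (∫ ω, X ω ∂μ) * ∫ ω, Y ω ∂μ := by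
          rw [show (fun ω => (D (k+1) ω) ^ η) = fun ω => X ω * Y ω from funext hpt]
          exact hindepXY.integral_fun_mul_eq_mul_integral hXint.aestronglyMeasurable hYint.aestronglyMeasurable
        refine ⟨?_, ?_⟩
        · rw [show (fun ω => (D (k+1) ω) ^ η) = fun ω => X ω * Y ω from funext hpt]
          exact hindepXY.integrable_mul hXint hYint
        · rw [hXY, (hm k).2]
          have hYbd : ∫ ω, Y ω ∂μ ≤ α ^ η * (∫ ω, (D k ω) ^ η ∂μ) + C ^ η := by
            have := integral_mono hYint hGint hYle
            rwa [integral_add (ihint.const_mul _) (integrable_const _),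
              integral_const_mul, integral_const, probReal_univ,
              one_smul] at this
          have hKbd : ∫ ω, Y ω ∂μ ≤ α ^ η * K + C ^ η := by
            have : α ^ η * (∫ ω, (D k ω) ^ η ∂μ) ≤ α ^ η * K :=
              mul_le_mul_of_nonneg_left ihbd (Real.rpow_nonneg hα _)
            linarith
          calc m * ∫ ω, Y ω ∂μ ≤ m * (α ^ η * K + C ^ η) :=
                mul_le_mul_of_nonneg_left hKbd hm0
            _ ≤ K := by
                have hK2 : m * C ^ η / (1 - α ^ η * m) ≤ K := le_max_right _ _
                have : m * C ^ η ≤ (1 - α ^ η * m) * K := by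
                  rw [div_le_iff₀ h1a] at hK2
                  linarith
                nlinarith
  intro k; exact (main k).2
end

section
/- With the dancing control U'_t = U_t + F(b_t) − λF(b_{t-1}) where F(b) = 3Γ_u b and Γ_u = Ω + (λ+1)Γ, if the observer computes D_t = X_o(t+1) − λX_o(t) − U_t, then |D_t − 3Γ_u b_t| ≤ Γ_u; hence since distinct integer values b ≠ b' give |3Γ_u b − 3Γ_u b'| ≥ 3Γ_u > 2Γ_u, the integer b_t is uniquely determined by D_t. -/
/-- With dancing control U'_t = U_t + F(b_t) − λF(b_{t-1}),
F(b) = 3Γ_u b, Γ_u = Ω + (λ+1)Γ > 0, plant X_{t+1} = λX_t + U'_t + W_t,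
|W_t| ≤ Ω/2, observations with noise bounded by Γ.  The observer computes
D_t = X_o(t+1) − λX_o(t) − U_t (compensating the known term λF(b_{t-1})).
Then |D_t − 3Γ_u b_t| ≤ Γ_u, and since distinct integers b ≠ b' give
|3Γ_u b − 3Γ_u b'| ≥ 3Γ_u > 2Γ_u, the integer b_t is uniquely determined. -/
theorem stmt10 (lam Ω Γ U W X0 X1 Xo0 Xo1 : ℝ) (b bprev : ℤ)
    (hlam : 1 < lam) (hΩ : 0 ≤ Ω) (hΓ : 0 ≤ Γ)
    (Γu : ℝ) (hΓu : Γu = Ω + (lam + 1) * Γ) (hΓupos : 0 < Γu)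
    (hW : |W| ≤ Ω / 2)
    (hplant : X1 = lam * X0 + (U + 3 * Γu * b - lam * (3 * Γu * bprev)) + W)
    (hobs0 : |Xo0 - X0| ≤ Γ) (hobs1 : |Xo1 - X1| ≤ Γ)
    (Dt : ℝ) (hDt : Dt = Xo1 - lam * Xo0 - U + lam * (3 * Γu * bprev)) :
    |Dt - 3 * Γu * b| ≤ Γu ∧
    (∀ b' : ℤ, b' ≠ b → |3 * Γu * (b : ℝ) - 3 * Γu * (b' : ℝ)| ≥ 3 * Γu) ∧
    3 * Γu > 2 * Γu ∧
    ∀ b' : ℤ, |Dt - 3 * Γu * b'| ≤ Γu → b' = b := by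

  have key : |Dt - 3 * Γu * b| ≤ Γu := by
    have h : Dt - 3 * Γu * b = (Xo1 - X1) - lam * (Xo0 - X0) + W := by
      rw [hDt, hplant]; ring
    have h2 : |(Xo1 - X1) - lam * (Xo0 - X0) + W| ≤ Γ + lam * Γ + Ω / 2 := by
      have hl : (0:ℝ) ≤ lam := by linarith
      calc |(Xo1 - X1) - lam * (Xo0 - X0) + W|
          ≤ |(Xo1 - X1) - lam * (Xo0 - X0)| + |W| := abs_add_le _ _
        _ ≤ |Xo1 - X1| + |lam * (Xo0 - X0)| + |W| := by
            have := abs_sub (Xo1 - X1) (lam * (Xo0 - X0)); linarith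
        _ = |Xo1 - X1| + lam * |Xo0 - X0| + |W| := by
            rw [abs_mul, abs_of_nonneg hl]
        _ ≤ Γ + lam * Γ + Ω / 2 := by
            have := mul_le_mul_of_nonneg_left hobs0 hl; linarith
    rw [h]; rw [hΓu]; nlinarith
  refine ⟨key, ?_, by linarith, ?_⟩
  · intro b' hne
    have h1 : (1:ℝ) ≤ |(b:ℝ) - (b':ℝ)| := by
      have : ((b - b' : ℤ) : ℝ) = (b:ℝ) - (b':ℝ) := by push_cast; ring
      rw [← this, ← Int.cast_abs]
      exact_mod_cast Int.one_le_abs (sub_ne_zero.mpr hne.symm)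
    have : 3 * Γu * (b:ℝ) - 3 * Γu * (b':ℝ) = 3 * Γu * ((b:ℝ) - b') := by ring
    rw [this, abs_mul, abs_of_nonneg (by linarith : (0:ℝ) ≤ 3 * Γu)]
    nlinarith
  · intro b' hb'
    by_contra hne
    have h1 : (1:ℝ) ≤ |(b:ℝ) - (b':ℝ)| := by
      have : ((b - b' : ℤ) : ℝ) = (b:ℝ) - (b':ℝ) := by push_cast; ring
      rw [← this, ← Int.cast_abs]
      exact_mod_cast Int.one_le_abs (sub_ne_zero.mpr (fun h => hne h.symm))
    have h2 : |3 * Γu * (b:ℝ) - 3 * Γu * (b':ℝ)| ≤ 2 * Γu := by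
      have := abs_sub_abs_le_abs_sub (Dt - 3 * Γu * b') (Dt - 3 * Γu * b)
      have h3 : |(Dt - 3 * Γu * b') - (Dt - 3 * Γu * b)| ≤ 2 * Γu := by
        calc |(Dt - 3 * Γu * b') - (Dt - 3 * Γu * b)|
            ≤ |Dt - 3 * Γu * b'| + |Dt - 3 * Γu * b| := abs_sub _ _
          _ ≤ 2 * Γu := by linarith
      have h4 : (Dt - 3 * Γu * b') - (Dt - 3 * Γu * b) = 3 * Γu * b - 3 * Γu * b' := by ring
      rwa [h4] at h3
    rw [show 3 * Γu * (b:ℝ) - 3 * Γu * (b':ℝ) = 3 * Γu * ((b:ℝ) - b') from by ring,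
        abs_mul, abs_of_nonneg (by linarith : (0:ℝ) ≤ 3 * Γu)] at h2
    nlinarith
end

section
/- Suppose between consecutive successful decodings the uncertainty evolves as Δ̄_{k+1} = λ^{T_k − n}(e^{-n(R − ln λ)} Δ̄_k + C_n) with (T_k − n) iid, P(T_k − n = j) = (1 − p)p^{j-1}, p = e^{-E₀(ρ)}, R = E₀(ρ)/ρ, and C_n = Γλ^n + Ωλ^{1+n}/(λ−1). If η ≤ ρ satisfies λ^η p < 1 (equivalently E₀(ρ) > η ln λ) and n is large enough that e^{-η n(R − ln λ)} E[λ^{η(T_1−n)}] < 1 (with η ≤ 1), then sup_k E[Δ̄_k^η] < ∞. -/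
open MeasureTheory ProbabilityTheory

lemma stmt15_rpow_subadd {x y η : ℝ} (hx : 0 ≤ x) (hy : 0 ≤ y) (h0 : 0 ≤ η) (h1 : η ≤ 1) :
    (x + y) ^ η ≤ x ^ η + y ^ η := by
  have h := NNReal.rpow_add_le_add_rpow x.toNNReal y.toNNReal h0 h1
  have h2 := NNReal.coe_le_coe.2 h
  push_cast at h2
  rwa [Real.coe_toNNReal x hx, Real.coe_toNNReal y hy] at h2

/-- Between consecutive successful decodings the uncertainty
bound evolves as Δ̄_{k+1} = λ^{T_k − n}(e^{-n(R − ln λ)} Δ̄_k + C_n), with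
(T_k − n) iid geometric on positive integers, failure probability
p = e^{-E₀(ρ)}, R = E₀(ρ)/ρ, and C_n = Γλ^n + Ωλ^{1+n}/(λ−1).  If η ≤ ρ,
η ∈ (0,1], λ^η p < 1 (equivalently E₀(ρ) > η ln λ), and n is large enough
that e^{-ηn(R − ln λ)} E[λ^{η(T_1 − n)}] < 1, then sup_k E[Δ̄_k^η] < ∞. -/
theorem stmt15 {Ω' : Type*} [MeasurableSpace Ω'] (μ : Measure Ω')
    [IsProbabilityMeasure μ]
    (lam Ωd Γ ρ η E₀ρ R p Cn : ℝ) (n : ℕ)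
    (hlam : 1 < lam) (hΩd : 0 ≤ Ωd) (hΓ : 0 ≤ Γ)
    (hρ : 0 < ρ) (hη : 0 < η) (hη1 : η ≤ 1) (hηρ : η ≤ ρ)
    (hE₀ : 0 < E₀ρ) (hp : p = Real.exp (-E₀ρ)) (hR : R = E₀ρ / ρ)
    (hRlam : Real.log lam < R)
    (hCn : Cn = Γ * lam ^ n + Ωd * lam ^ (1 + n) / (lam - 1))
    (T : ℕ → Ω' → ℕ) (D : ℕ → Ω' → ℝ)
    (hTn : ∀ k ω, n + 1 ≤ T k ω)
    (hTmeas : ∀ k, Measurable (T k)) (hDmeas : ∀ k, Measurable (D k))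
    (hiid : ∀ j k, IdentDistrib (T j) (T k) μ μ)
    (hdist : ∀ k, ∀ j : ℕ, 1 ≤ j →
      μ {ω | T k ω - n = j} = ENNReal.ofReal ((1 - p) * p ^ (j - 1)))
    (hindep : ∀ k, IndepFun (T k) (D k) μ)
    (hcontr : lam ^ η * p < 1)
    (hmom : Integrable (fun ω => lam ^ (η * ((T 0 ω - n : ℕ) : ℝ))) μ)
    (hn : Real.exp (-(η * n * (R - Real.log lam))) *
      ∫ ω, lam ^ (η * ((T 0 ω - n : ℕ) : ℝ)) ∂μ < 1)
    (hD0 : ∀ ω, 0 ≤ D 0 ω)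
    (hrec : ∀ k ω, D (k + 1) ω =
      lam ^ (T k ω - n) *
        (Real.exp (-(n * (R - Real.log lam))) * D k ω + Cn)) :
    ∃ K : ℝ, ∀ k, ∫ ω, (D k ω) ^ η ∂μ ≤ K := by
  have hlam0 : (0:ℝ) < lam := lt_trans one_pos hlam
  have hCn0 : 0 ≤ Cn := by
    have h1 : (0:ℝ) ≤ Γ * lam ^ n := by positivity
    have h2 : (0:ℝ) ≤ Ωd * lam ^ (1 + n) / (lam - 1) :=
      div_nonneg (by positivity) (by linarith)
    rw [hCn]; linarith
  set a : ℝ := Real.exp (-(n * (R - Real.log lam))) with ha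
  have ha0 : 0 < a := Real.exp_pos _
  -- nonnegativity of D
  have hDnn : ∀ k ω, 0 ≤ D k ω := by
    intro k
    induction k with
    | zero => exact hD0
    | succ k ih =>
      intro ω
      rw [hrec k ω]
      have := ih ω
      have h1 : (0:ℝ) ≤ lam ^ (T k ω - n) := by positivity
      have h2 : 0 ≤ a * D k ω := mul_nonneg ha0.le this
      nlinarith
  -- the function of T
  set φ : ℕ → ℝ := fun m => lam ^ (η * ((m - n : ℕ) : ℝ)) with hφ
  have hφmeas : Measurable φ := measurable_from_nat
  have hφnn : ∀ m, 0 ≤ φ m := fun m => Real.rpow_nonneg hlam0.le _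
  set M : ℝ := ∫ ω, lam ^ (η * ((T 0 ω - n : ℕ) : ℝ)) ∂μ with hM
  have hM0 : 0 ≤ M := integral_nonneg fun ω => Real.rpow_nonneg hlam0.le _
  have hfid : ∀ k, IdentDistrib (fun ω => φ (T k ω)) (fun ω => φ (T 0 ω)) μ μ :=
    fun k => (hiid k 0).comp hφmeas
  have hfint : ∀ k, Integrable (fun ω => φ (T k ω)) μ :=
    fun k => (hfid k).integrable_iff.2 hmom
  have hfeq : ∀ k, ∫ ω, φ (T k ω) ∂μ = M := fun k => (hfid k).integral_eq
  -- contraction factor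
  have haη : a ^ η = Real.exp (-(η * n * (R - Real.log lam))) := by
    rw [ha, ← Real.exp_mul]; ring_nf
  set q : ℝ := a ^ η * M with hq
  have hq0 : 0 ≤ q := mul_nonneg (Real.rpow_nonneg ha0.le _) hM0
  have hq1 : q < 1 := by rw [hq, haη]; exact hn
  -- key pointwise upper bound
  have hkey : ∀ k ω, D (k + 1) ω ^ η ≤ φ (T k ω) * (a ^ η * D k ω ^ η + Cn ^ η) := by
    intro k ω
    rw [hrec k ω]
    have hD := hDnn k ω
    have h1 : (0:ℝ) ≤ lam ^ (T k ω - n) := by positivity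
    have h2 : 0 ≤ a * D k ω := mul_nonneg ha0.le hD
    rw [Real.mul_rpow h1 (by linarith)]
    have hpow : ((lam : ℝ) ^ (T k ω - n)) ^ η = φ (T k ω) := by
      rw [hφ, ← Real.rpow_natCast lam (T k ω - n), ← Real.rpow_mul hlam0.le]
      ring_nf
    rw [hpow]
    refine mul_le_mul_of_nonneg_left ?_ (hφnn _)
    calc (a * D k ω + Cn) ^ η ≤ (a * D k ω) ^ η + Cn ^ η :=
          stmt15_rpow_subadd h2 hCn0 hη.le hη1
      _ = a ^ η * D k ω ^ η + Cn ^ η := by rw [Real.mul_rpow ha0.le hD]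
  -- key pointwise lower bound
  have hlow : ∀ k ω, a ^ η * D k ω ^ η ≤ D (k + 1) ω ^ η := by
    intro k ω
    have hD := hDnn k ω
    have h2 : 0 ≤ a * D k ω := mul_nonneg ha0.le hD
    have hle : a * D k ω ≤ D (k + 1) ω := by
      rw [hrec k ω]
      have h1 : (1:ℝ) ≤ lam ^ (T k ω - n) := one_le_pow₀ hlam.le
      nlinarith
    calc a ^ η * D k ω ^ η = (a * D k ω) ^ η := (Real.mul_rpow ha0.le hD).symm
      _ ≤ D (k + 1) ω ^ η := Real.rpow_le_rpow h2 hle hη.le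
  have haηpos : 0 < a ^ η := Real.rpow_pos_of_pos ha0 _
  by_cases hInt0 : Integrable (fun ω => D 0 ω ^ η) μ
  · -- integrable case
    set K : ℝ := max (∫ ω, D 0 ω ^ η ∂μ) (M * Cn ^ η / (1 - q)) with hK
    refine ⟨K, ?_⟩
    have hKq : q * K + M * Cn ^ η ≤ K := by
      have h1 : M * Cn ^ η / (1 - q) ≤ K := le_max_right _ _
      have h2 : M * Cn ^ η ≤ (1 - q) * K := by
        rw [div_le_iff₀ (by linarith)] at h1; linarith
      nlinarith
    suffices h : ∀ k, Integrable (fun ω => D k ω ^ η) μ ∧ ∫ ω, D k ω ^ η ∂μ ≤ K by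
      exact fun k => (h k).2
    intro k
    induction k with
    | zero => exact ⟨hInt0, le_max_left _ _⟩
    | succ k ih =>
      obtain ⟨hik, hlek⟩ := ih
      set ψ : ℝ → ℝ := fun x => a ^ η * x ^ η + Cn ^ η with hψ
      have hψmeas : Measurable ψ :=
        ((measurable_id.pow_const η).const_mul _).add_const _
      have hgint : Integrable (fun ω => ψ (D k ω)) μ := by
        simpa [hψ] using (hik.const_mul (a ^ η)).add (integrable_const (Cn ^ η))
      have hIf : IndepFun (fun ω => φ (T k ω)) (fun ω => ψ (D k ω)) μ :=
        (hindep k).comp hφmeas hψmeas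
      have hprodint : Integrable ((fun ω => φ (T k ω)) * (fun ω => ψ (D k ω))) μ :=
        hIf.integrable_mul (hfint k) hgint
      have hψeq : ∀ ω, ψ (D k ω) = a ^ η * D k ω ^ η + Cn ^ η := fun ω => rfl
      have hik1 : Integrable (fun ω => D (k + 1) ω ^ η) μ := by
        refine hprodint.mono' ((hDmeas (k+1)).pow_const η).aestronglyMeasurable ?_
        filter_upwards with ω
        rw [Real.norm_eq_abs, abs_of_nonneg (Real.rpow_nonneg (hDnn (k+1) ω) _)]
        exact hkey k ω
      refine ⟨hik1, ?_⟩
      have hle1 : ∫ ω, D (k + 1) ω ^ η ∂μ ≤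
          ∫ ω, φ (T k ω) * ψ (D k ω) ∂μ :=
        integral_mono hik1 hprodint (fun ω => hkey k ω)
      have hmul : ∫ ω, φ (T k ω) * ψ (D k ω) ∂μ =
          (∫ ω, φ (T k ω) ∂μ) * ∫ ω, ψ (D k ω) ∂μ :=
        hIf.integral_fun_mul_eq_mul_integral (hfint k).aestronglyMeasurable hgint.aestronglyMeasurable
      have hgval : ∫ ω, ψ (D k ω) ∂μ = a ^ η * (∫ ω, D k ω ^ η ∂μ) + Cn ^ η := by
        simp only [hψ]
        rw [integral_add (hik.const_mul _) (integrable_const _),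
          integral_const_mul _, integral_const]
        simp
      calc ∫ ω, D (k + 1) ω ^ η ∂μ ≤ (∫ ω, φ (T k ω) ∂μ) * ∫ ω, ψ (D k ω) ∂μ := by
            rw [← hmul]; exact hle1
        _ = M * (a ^ η * (∫ ω, D k ω ^ η ∂μ) + Cn ^ η) := by rw [hfeq k, hgval]
        _ = q * (∫ ω, D k ω ^ η ∂μ) + M * Cn ^ η := by rw [hq]; ring
        _ ≤ q * K + M * Cn ^ η := by
            have := mul_le_mul_of_nonneg_left hlek hq0; linarith
        _ ≤ K := hKq
  · -- non-integrable case: every integral is the junk value 0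
    refine ⟨0, ?_⟩
    have hni : ∀ k, ¬ Integrable (fun ω => D k ω ^ η) μ := by
      intro k
      induction k with
      | zero => exact hInt0
      | succ k ih =>
        intro hik1
        apply ih
        refine (hik1.const_mul ((a ^ η)⁻¹)).mono'
          ((hDmeas k).pow_const η).aestronglyMeasurable ?_
        filter_upwards with ω
        rw [Real.norm_eq_abs, abs_of_nonneg (Real.rpow_nonneg (hDnn k ω) _)]
        rw [le_inv_mul_iff₀ haηpos]
        exact hlow k ω
    intro k
    rw [integral_undef (hni k)]
end
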